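/- Let (q_t, p_t) solve the underdamped gradient flow q' = p, p' = −∇Φ̄(q) − αp, where Φ̄ ∈ C¹ satisfies (x − θ*)·∇Φ̄(x)/2 ≥ λ(Φ̄(x) − Φ̄(θ*) + α²‖x − θ*‖²/4) for some λ ∈ (0, 1/4]. Then ‖p_t‖² + ‖q_t − θ*‖² ≤ C_{α,λ} e^{−αλt} V(q₀, p₀), where C_{α,λ} = 4 + 8/(α²(1 − 2λ)) and V is the Lyapunov function V(x,y) = Φ̄(x) − Φ̄(θ*) + (α²/4)(‖x − θ* + α⁻¹y‖² + ‖α⁻¹y‖² − λ‖x − θ*‖²). -/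

import Mathlib

set_option maxHeartbeats 2000000

open RealInnerProductSpace

private lemma stmt5_scal (α lam A1 A2 A3 n1 n2 Φv : ℝ) (hα : 0 < α) (hlam0 : 0 < lam)
    (hlam4 : lam ≤ 1/4)
    (hz : lam * (Φv + α ^ 2 * n1 / 4) ≤ A1 / 2) (hn1 : 0 ≤ n1) (hn2 : 0 ≤ n2) :
    A2 + α ^ 2 / 4 * (2 * (-(α⁻¹ * A1) - α⁻¹ ^ 2 * A2) + 2 * (α⁻¹ ^ 2 * (-A2 - α * n2))
        - lam * (2 * A3))
      ≤ -(α * lam) * (Φv + α ^ 2 / 4 * ((n1 + 2 * (α⁻¹ * A3) + α⁻¹ ^ 2 * n2)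
        + α⁻¹ ^ 2 * n2 - lam * n1)) := by
  have hLHS : A2 + α ^ 2 / 4 * (2 * (-(α⁻¹ * A1) - α⁻¹ ^ 2 * A2) + 2 * (α⁻¹ ^ 2 * (-A2 - α * n2))
        - lam * (2 * A3))
      = -(α / 2) * A1 - (α / 2) * n2 - lam * α ^ 2 / 2 * A3 := by
    field_simp; ring
  have hRHS : -(α * lam) * (Φv + α ^ 2 / 4 * ((n1 + 2 * (α⁻¹ * A3) + α⁻¹ ^ 2 * n2)
        + α⁻¹ ^ 2 * n2 - lam * n1))
      = -(α * lam) * Φv - α ^ 3 * lam / 4 * n1 - α ^ 2 * lam / 2 * A3 - α * lam / 2 * n2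
        + α ^ 3 * lam ^ 2 / 4 * n1 := by
    field_simp; ring
  rw [hLHS, hRHS]
  nlinarith [mul_nonneg hα.le (sub_nonneg.mpr hz), mul_nonneg hα.le hn2,
    mul_nonneg (mul_nonneg hα.le hα.le) (mul_nonneg hα.le hn1),
    mul_nonneg (mul_nonneg hlam0.le hα.le) hn2,
    mul_nonneg (mul_nonneg (mul_nonneg hlam0.le hlam0.le)
      (mul_nonneg (mul_nonneg hα.le hα.le) hα.le)) hn1]

/-- Exponential convergence of position and velocity of the underdamped gradient flow. -/
theorem stmt5 {K : ℕ} (Φ : EuclideanSpace ℝ (Fin K) → ℝ) (α lam : ℝ)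
    (hα : 0 < α) (hlam : lam ∈ Set.Ioc (0 : ℝ) (1 / 4))
    (hC1 : ContDiff ℝ 1 Φ)
    (θs : EuclideanSpace ℝ (Fin K)) (hmin : ∀ x, Φ θs ≤ Φ x)
    (hass : ∀ x, lam * (Φ x - Φ θs + α ^ 2 * ‖x - θs‖ ^ 2 / 4)
      ≤ ⟪x - θs, gradient Φ x⟫ / 2)
    (q p : ℝ → EuclideanSpace ℝ (Fin K))
    (hq : ∀ t, HasDerivAt q (p t) t)
    (hp : ∀ t, HasDerivAt p (-(gradient Φ (q t)) - α • p t) t)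
    (V : EuclideanSpace ℝ (Fin K) → EuclideanSpace ℝ (Fin K) → ℝ)
    (hV : ∀ x y, V x y = Φ x - Φ θs
      + α ^ 2 / 4 * (‖x - θs + α⁻¹ • y‖ ^ 2 + ‖α⁻¹ • y‖ ^ 2 - lam * ‖x - θs‖ ^ 2)) :
    ∀ t ≥ (0 : ℝ), ‖p t‖ ^ 2 + ‖q t - θs‖ ^ 2
      ≤ (4 + 8 / (α ^ 2 * (1 - 2 * lam))) * Real.exp (-(α * lam * t)) * V (q 0) (p 0) := by
  obtain ⟨hlam0, hlam4⟩ := hlam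
  have hl2 : 0 < 1 - 2 * lam := by linarith
  have hβ : 0 < α ^ 2 * (1 - 2 * lam) := by positivity
  -- Step 1: quadratic growth of Φ around the minimiser
  have hgrow : ∀ x, lam * α ^ 2 * ‖x - θs‖ ^ 2 / 4 ≤ Φ x - Φ θs := by
    intro x
    set u := x - θs with hu
    set ψ : ℝ → ℝ := fun r => Φ (θs + r • u) - lam * α ^ 2 * r ^ 2 * ‖u‖ ^ 2 / 4 with hψ
    have hγ : ∀ r : ℝ, HasDerivAt (fun r : ℝ => θs + r • u) u r := by
      intro r
      simpa using ((hasDerivAt_id r).smul_const u).const_add θs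
    have hψd : ∀ r : ℝ, HasDerivAt ψ
        (⟪gradient Φ (θs + r • u), u⟫ - lam * α ^ 2 * (2 * r) * ‖u‖ ^ 2 / 4) r := by
      intro r
      have h1 : HasDerivAt (fun r : ℝ => Φ (θs + r • u)) (⟪gradient Φ (θs + r • u), u⟫) r :=
        (hasGradientAt_iff_hasFDerivAt.mp
          (hC1.differentiable one_ne_zero _).hasGradientAt).comp_hasDerivAt r (hγ r)
      have h2 : HasDerivAt (fun r : ℝ => lam * α ^ 2 * r ^ 2 * ‖u‖ ^ 2 / 4)
          (lam * α ^ 2 * (2 * r) * ‖u‖ ^ 2 / 4) r := by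
        have := (hasDerivAt_pow 2 r).const_mul (lam * α ^ 2)
        simpa [mul_comm, mul_assoc, mul_left_comm] using (this.mul_const (‖u‖ ^ 2)).div_const 4
      exact h1.sub h2
    have hmono : MonotoneOn ψ (Set.Icc 0 1) := by
      apply monotoneOn_of_deriv_nonneg (convex_Icc 0 1)
      · exact Continuous.continuousOn (by
          apply Continuous.sub
          · exact (hC1.continuous).comp (by continuity)
          · continuity)
      · intro r _; exact (hψd r).differentiableAt.differentiableWithinAt
      · intro r hr
        rw [interior_Icc] at hr
        rw [(hψd r).deriv]
        have hz := hass (θs + r • u)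
        have hsub : θs + r • u - θs = r • u := by abel
        rw [hsub] at hz
        have hnn : Φ θs ≤ Φ (θs + r • u) := hmin _
        have hinner : ⟪r • u, gradient Φ (θs + r • u)⟫ = r * ⟪u, gradient Φ (θs + r • u)⟫ :=
          real_inner_smul_left _ _ _
        have hns : ‖r • u‖ ^ 2 = r ^ 2 * ‖u‖ ^ 2 := by
          rw [norm_smul, mul_pow, Real.norm_eq_abs, sq_abs]
        rw [hinner, hns] at hz
        rw [real_inner_comm]
        set P := ⟪u, gradient Φ (θs + r • u)⟫ with hP
        set N := ‖u‖ ^ 2 with hN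
        have h5 : lam * α ^ 2 * r ^ 2 * N / 4 ≤ r * P / 2 := by
          nlinarith [mul_nonneg hlam0.le (sub_nonneg.mpr hnn)]
        have h6 : r * (lam * α ^ 2 * (2 * r) * N / 4) ≤ r * P := by nlinarith
        have h7 := le_of_mul_le_mul_left h6 hr.1
        linarith
    have h01 : (0:ℝ) ∈ Set.Icc (0:ℝ) 1 := Set.mem_Icc.mpr ⟨le_refl 0, zero_le_one⟩
    have h11 : (1:ℝ) ∈ Set.Icc (0:ℝ) 1 := Set.mem_Icc.mpr ⟨zero_le_one, le_refl 1⟩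
    have := hmono h01 h11 zero_le_one
    simp only [hψ, zero_smul, add_zero, one_smul] at this
    rw [hu] at this
    rw [add_sub_cancel] at this
    simp at this
    linarith
  -- Step 2: the Lyapunov function dominates the squared norms
  have hlb : ∀ x y, ‖y‖ ^ 2 + ‖x - θs‖ ^ 2 ≤ (4 + 8 / (α ^ 2 * (1 - 2 * lam))) * V x y := by
    intro x y
    rw [hV]
    have hgr := hgrow x
    set u := x - θs with hu
    have hexp : ‖u + α⁻¹ • y‖ ^ 2 = ‖u‖ ^ 2 + 2 * (α⁻¹ * ⟪u, y⟫) + α⁻¹ ^ 2 * ‖y‖ ^ 2 := by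
      rw [norm_add_sq_real, real_inner_smul_right, norm_smul]
      rw [Real.norm_eq_abs, mul_pow, sq_abs]
    have hexp2 : ‖α⁻¹ • y‖ ^ 2 = α⁻¹ ^ 2 * ‖y‖ ^ 2 := by
      rw [norm_smul, Real.norm_eq_abs, mul_pow, sq_abs]
    rw [hexp, hexp2]
    set a := ‖u‖ with ha
    set b := ‖y‖ with hb
    set s := ⟪u, y⟫ with hs
    have hab : -(a * b) ≤ s := by
      have h := abs_real_inner_le_norm u y
      rw [abs_le] at h; exact h.1
    have ha0 : 0 ≤ a := norm_nonneg u
    have hb0 : 0 ≤ b := norm_nonneg y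
    set Φu := Φ x - Φ θs with hΦu
    have hval : Φu + α ^ 2 / 4 * (a ^ 2 + 2 * (α⁻¹ * s) + α⁻¹ ^ 2 * b ^ 2
          + α⁻¹ ^ 2 * b ^ 2 - lam * a ^ 2)
        = Φu + α ^ 2 * (1 - lam) / 4 * a ^ 2 + α / 2 * s + b ^ 2 / 2 := by
      field_simp
      ring
    rw [hval]
    set β := α ^ 2 * (1 - 2 * lam) with hβd
    have hβle : β ≤ α ^ 2 := by rw [hβd]; nlinarith
    have hCval : 4 + 8 / β = (4 * β + 8) / β := by field_simp
    rw [hCval, div_mul_eq_mul_div, le_div_iff₀ hβ]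
    have hA' : 0 < β * α ^ 2 + 2 * α ^ 2 - β := by nlinarith
    have hADnn : 0 ≤ α ^ 2 * (8 * β + 16) - 4 * β ^ 2 - 16 * β := by nlinarith
    have hsab : 0 ≤ s + a * b := by linarith
    have hlamβ : 2 * lam * α ^ 2 = α ^ 2 - β := by rw [hβd]; ring
    nlinarith [mul_nonneg (mul_nonneg hA'.le (by positivity : (0:ℝ) ≤ (2 * β + 4) * α)) hsab,
      sq_nonneg (2 * (β * α ^ 2 + 2 * α ^ 2 - β) * a - (2 * β + 4) * α * b),
      mul_nonneg hADnn (sq_nonneg b),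
      mul_nonneg (mul_nonneg (by positivity : (0:ℝ) ≤ 4 * β + 8) hA'.le)
        (sub_nonneg.mpr hgr), hA', hlamβ, hβ]
  -- Step 3: derivative of t ↦ V (q t) (p t)
  set g : ℝ → ℝ := fun t => V (q t) (p t) with hgdef
  have hgeq : ∀ t, g t = Φ (q t) - Φ θs + α ^ 2 / 4 * (‖q t - θs + α⁻¹ • p t‖ ^ 2
      + ‖α⁻¹ • p t‖ ^ 2 - lam * ‖q t - θs‖ ^ 2) := fun t => hV (q t) (p t)
  have normsq : ∀ (c : ℝ → EuclideanSpace ℝ (Fin K)) (c' : EuclideanSpace ℝ (Fin K)) (t : ℝ),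
      HasDerivAt c c' t → HasDerivAt (fun t => ‖c t‖ ^ 2) (2 * ⟪c t, c'⟫) t := by
    intro c c' t h
    have h2 := h.inner ℝ h
    simp only [real_inner_self_eq_norm_sq] at h2
    rw [real_inner_comm (c t) c', ← two_mul] at h2
    exact h2
  set D : ℝ → ℝ := fun t => ⟪gradient Φ (q t), p t⟫ + α ^ 2 / 4 *
      (2 * ⟪q t - θs + α⁻¹ • p t, p t + α⁻¹ • (-(gradient Φ (q t)) - α • p t)⟫
       + 2 * ⟪α⁻¹ • p t, α⁻¹ • (-(gradient Φ (q t)) - α • p t)⟫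
       - lam * (2 * ⟪q t - θs, p t⟫)) with hD
  have hgd : ∀ t, HasDerivAt g (D t) t := by
    intro t
    have h1 : HasDerivAt (fun t => Φ (q t)) (⟪gradient Φ (q t), p t⟫) t :=
      (hasGradientAt_iff_hasFDerivAt.mp
        (hC1.differentiable one_ne_zero (q t)).hasGradientAt).comp_hasDerivAt t (hq t)
    have hqs : HasDerivAt (fun t => q t - θs) (p t) t := (hq t).sub_const θs
    have hw : HasDerivAt (fun t => q t - θs + α⁻¹ • p t)
        (p t + α⁻¹ • (-(gradient Φ (q t)) - α • p t)) t :=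
      hqs.add ((hp t).const_smul α⁻¹)
    have h2 := normsq _ _ t hw
    have h3 := normsq _ _ t ((hp t).const_smul α⁻¹ : HasDerivAt (fun t => α⁻¹ • p t) _ t)
    have h4 := normsq _ _ t hqs
    have h5 := ((h1.sub_const (Φ θs)).add
      (((h2.add h3).sub (h4.const_mul lam)).const_mul (α ^ 2 / 4)))
    have : g = fun t => Φ (q t) - Φ θs + α ^ 2 / 4 * (‖q t - θs + α⁻¹ • p t‖ ^ 2
        + ‖α⁻¹ • p t‖ ^ 2 - lam * ‖q t - θs‖ ^ 2) := funext hgeq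
    rw [this, hD]
    exact h5
  -- Step 4: derivative bound D t ≤ -(α lam) g t
  have hdec : ∀ t, D t ≤ -(α * lam) * g t := by
    intro t
    have hz := hass (q t)
    have hm := hmin (q t)
    simp only [hD]
    rw [hgeq t]
    have harg : p t + α⁻¹ • (-(gradient Φ (q t)) - α • p t) = -(α⁻¹ • gradient Φ (q t)) := by
      rw [smul_sub, smul_neg, smul_smul, inv_mul_cancel₀ hα.ne', one_smul]
      abel
    have i1 : ⟪q t - θs + α⁻¹ • p t, p t + α⁻¹ • (-(gradient Φ (q t)) - α • p t)⟫
        = -(α⁻¹ * ⟪q t - θs, gradient Φ (q t)⟫) - α⁻¹ ^ 2 * ⟪gradient Φ (q t), p t⟫ := by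
      rw [harg, inner_neg_right, inner_add_left, real_inner_smul_right, real_inner_smul_left,
        real_inner_smul_right, real_inner_comm (p t)]
      ring
    have i2 : ⟪α⁻¹ • p t, α⁻¹ • (-(gradient Φ (q t)) - α • p t)⟫
        = α⁻¹ ^ 2 * (-⟪gradient Φ (q t), p t⟫ - α * ‖p t‖ ^ 2) := by
      rw [real_inner_smul_left, real_inner_smul_right, inner_sub_right, inner_neg_right,
        real_inner_smul_right, real_inner_self_eq_norm_sq, real_inner_comm (p t)]
      ring
    have e1 : ‖q t - θs + α⁻¹ • p t‖ ^ 2 = ‖q t - θs‖ ^ 2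
        + 2 * (α⁻¹ * ⟪q t - θs, p t⟫) + α⁻¹ ^ 2 * ‖p t‖ ^ 2 := by
      rw [norm_add_sq_real, real_inner_smul_right, norm_smul]
      rw [Real.norm_eq_abs, mul_pow, sq_abs]
    have e2 : ‖α⁻¹ • p t‖ ^ 2 = α⁻¹ ^ 2 * ‖p t‖ ^ 2 := by
      rw [norm_smul, Real.norm_eq_abs, mul_pow, sq_abs]
    rw [i1, i2, e1, e2]
    have key := stmt5_scal α lam (⟪q t - θs, gradient Φ (q t)⟫) (⟪gradient Φ (q t), p t⟫)
      (⟪q t - θs, p t⟫) (‖q t - θs‖ ^ 2) (‖p t‖ ^ 2) (Φ (q t) - Φ θs) hα hlam0 hlam4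
      (by linarith [hz]) (sq_nonneg _) (sq_nonneg _)
    convert key using 2 <;> ring
  -- Step 5: Gronwall
  have hmul : ∀ t, HasDerivAt (fun t => g t * Real.exp (α * lam * t))
      (D t * Real.exp (α * lam * t) + g t * (Real.exp (α * lam * t) * (α * lam))) t := by
    intro t
    have hE : HasDerivAt (fun t : ℝ => Real.exp (α * lam * t))
        (Real.exp (α * lam * t) * (α * lam)) t := by
      have h0 : HasDerivAt (fun t : ℝ => α * lam * t) (α * lam) t := by
        simpa using (hasDerivAt_id t).const_mul (α * lam)
      simpa using h0.exp
    exact (hgd t).mul hE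
  have hanti : Antitone (fun t => g t * Real.exp (α * lam * t)) := by
    apply antitone_of_deriv_nonpos
    · exact fun t => (hmul t).differentiableAt
    · intro t
      rw [(hmul t).deriv]
      have := hdec t
      nlinarith [Real.exp_pos (α * lam * t), hdec t]
  intro t ht
  have hft : g t * Real.exp (α * lam * t) ≤ g 0 * Real.exp (α * lam * 0) := hanti ht
  have hE0 : Real.exp (α * lam * 0) = 1 := by norm_num
  rw [hE0, mul_one] at hft
  have hEpos : 0 < Real.exp (α * lam * t) := Real.exp_pos _
  have hEinv : Real.exp (-(α * lam * t)) * Real.exp (α * lam * t) = 1 := by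
    rw [← Real.exp_add]; simp
  have hgt : g t ≤ Real.exp (-(α * lam * t)) * g 0 := by
    have h := mul_le_mul_of_nonneg_left hft (Real.exp_pos (-(α * lam * t))).le
    calc g t = Real.exp (-(α * lam * t)) * Real.exp (α * lam * t) * g t := by
          rw [hEinv, one_mul]
      _ = Real.exp (-(α * lam * t)) * (g t * Real.exp (α * lam * t)) := by ring
      _ ≤ Real.exp (-(α * lam * t)) * g 0 := h
  have hC0 : (0:ℝ) ≤ 4 + 8 / (α ^ 2 * (1 - 2 * lam)) := by positivity
  calc ‖p t‖ ^ 2 + ‖q t - θs‖ ^ 2 ≤ (4 + 8 / (α ^ 2 * (1 - 2 * lam))) * g t := hlb (q t) (p t)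
    _ ≤ (4 + 8 / (α ^ 2 * (1 - 2 * lam))) * (Real.exp (-(α * lam * t)) * g 0) :=
        mul_le_mul_of_nonneg_left hgt hC0
    _ = (4 + 8 / (α ^ 2 * (1 - 2 * lam))) * Real.exp (-(α * lam * t)) * V (q 0) (p 0) := by
        rw [hgdef]; ring
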